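/- Let M = (R,T,c) and M' = (R,T,c') be MRTA instances on the same robots and tasks whose cost functions c and c' are both injective on E, and let (W, a) be the output of the SSI auction on M, with u_k the second-best edge of round k. Suppose there exists K such that the edge e = w_K is a winning edge and c'(f) = c(f) for all f ∈ E ∖ {e}. Then the SSI auction on M' outputs the same winning-edge list and assignment function as the SSI auction on M if and only if c(u_K) > c'(e), and in addition c'(e) > max_{k ∈ B_e ∖ {K}} c(w_k) when B_e ∖ {K} ≠ ∅, while c'(e) ≥ 0 when B_e = {K}. -/
import Mathlib


open Finset

/-- The set of tasks assigned in the bid rounds with (0-based) index `< k`. -/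
def auctionAssigned {V : Type*} [DecidableEq V] {n : ℕ} (w : Fin n → V × V) (k : ℕ) :
    Finset V :=
  (Finset.univ.filter fun i : Fin n => (i : ℕ) < k).image fun i => (w i).2

/-- `w` is the output of the SSI auction for the instance `(R, T, c)`. -/
def IsAuction {V : Type*} [DecidableEq V] (R T : Finset V) (c : V → V → ℝ) {n : ℕ}
    (w : Fin n → V × V) : Prop :=
  ∀ k : Fin n,
    (w k).1 ∈ R ∪ auctionAssigned w (k : ℕ) ∧
    (w k).2 ∈ T \ auctionAssigned w (k : ℕ) ∧
    ∀ s ∈ R ∪ auctionAssigned w (k : ℕ), ∀ t ∈ T \ auctionAssigned w (k : ℕ),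
      (s, t) ≠ w k → c (w k).1 (w k).2 < c s t

/-- `c` is injective on the edge set of the complete graph. -/
def InjOnEdges {V : Type*} (c : V → V → ℝ) : Prop :=
  ∀ x y x' y' : V, x ≠ y → x' ≠ y' → c x y = c x' y' →
    (x = x' ∧ y = y') ∨ (x = y' ∧ y = x')

/-- The assignment function of the auction: `a v = k` if `v` is the task assigned
in (1-based) round `k`, and `a v = 0` if `v` is never assigned (e.g. a robot). -/
def assignFn {V : Type*} [DecidableEq V] {n : ℕ} (w : Fin n → V × V) (v : V) : ℕ :=
  (Finset.univ.filter fun k : Fin n => (w k).2 = v).sup fun k => (k : ℕ) + 1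

/-- The set `B_e` of (1-based) bid rounds considering the edge `e = {x,y}`:
`B_e = {k : min(a x, a y) < k ≤ max(a x, a y)}`. -/
def bidRounds {V : Type*} (a : V → ℕ) (x y : V) : Finset ℕ :=
  Finset.Ioc (min (a x) (a y)) (max (a x) (a y))


/-- `p` is the second-best edge of round `K`: it is an edge considered in round `K`,
distinct from the winning edge `w K`, of minimal cost among all such edges. -/
def IsSecondBest {V : Type*} [DecidableEq V] (c : V → V → ℝ) {n : ℕ}
    (w : Fin n → V × V) (K : Fin n) (p : V × V) : Prop :=
  p.1 ≠ p.2 ∧ p ≠ w K ∧ (p.2, p.1) ≠ w K ∧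
  ((K : ℕ) + 1) ∈ bidRounds (assignFn w) p.1 p.2 ∧
  ∀ x y : V, x ≠ y → ((K : ℕ) + 1) ∈ bidRounds (assignFn w) x y →
    (x, y) ≠ w K → (y, x) ≠ w K → c p.1 p.2 ≤ c x y


set_option linter.unusedSectionVars false

section Helpers

variable {V : Type*} [Fintype V] [DecidableEq V] {R T : Finset V} {c : V → V → ℝ}
  {w : Fin T.card → V × V}

lemma mem_assigned_iff {n : ℕ} (w : Fin n → V × V) (k : ℕ) (v : V) :
    v ∈ auctionAssigned w k ↔ ∃ j : Fin n, (j : ℕ) < k ∧ (w j).2 = v := by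
  simp [auctionAssigned]

lemma win_tasks_inj (hw : IsAuction R T c w) {j k : Fin T.card}
    (h : (w j).2 = (w k).2) : j = k := by
  by_contra hne
  rcases lt_trichotomy (j : ℕ) (k : ℕ) with hlt | heq | hlt
  · have h2 := (hw k).2.1
    rw [Finset.mem_sdiff] at h2
    exact h2.2 ((mem_assigned_iff w k (w k).2).2 ⟨j, hlt, h⟩)
  · exact hne (Fin.ext heq)
  · have h2 := (hw j).2.1
    rw [Finset.mem_sdiff] at h2
    exact h2.2 ((mem_assigned_iff w j (w j).2).2 ⟨k, hlt, h.symm⟩)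

lemma assignFn_win (hw : IsAuction R T c w) (k : Fin T.card) :
    assignFn w (w k).2 = (k : ℕ) + 1 := by
  have hf : (Finset.univ.filter fun j : Fin T.card => (w j).2 = (w k).2) = {k} := by
    ext j
    simp only [Finset.mem_filter, Finset.mem_univ, true_and, Finset.mem_singleton]
    exact ⟨fun h => win_tasks_inj hw h, fun h => h ▸ rfl⟩
  rw [assignFn, hf, Finset.sup_singleton]

lemma exists_of_assignFn_pos {v : V} (h : 0 < assignFn w v) :
    ∃ j : Fin T.card, (w j).2 = v := by
  by_contra hc
  push_neg at hc
  have : (Finset.univ.filter fun j : Fin T.card => (w j).2 = v) = ∅ := by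
    apply Finset.filter_eq_empty_iff.2; intro j _; exact hc j
  rw [assignFn, this, Finset.sup_empty] at h
  exact absurd h (by simp)

lemma exists_round (hw : IsAuction R T c w) {t : V} (ht : t ∈ T) :
    ∃ k : Fin T.card, (w k).2 = t := by
  have himg : (Finset.univ.image fun k : Fin T.card => (w k).2) = T := by
    apply Finset.eq_of_subset_of_card_le
    · intro v hv
      rcases Finset.mem_image.1 hv with ⟨k, _, hk⟩
      have := (hw k).2.1
      rw [Finset.mem_sdiff] at this
      exact hk ▸ this.1
    · rw [Finset.card_image_of_injective _ (fun j k h => win_tasks_inj hw h)]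
      simp
  rw [← himg] at ht
  rcases Finset.mem_image.1 ht with ⟨k, _, hk⟩
  exact ⟨k, hk⟩

lemma assignFn_le (hw : IsAuction R T c w) (hdisj : Disjoint R T) {s : V} {k : ℕ}
    (hs : s ∈ R ∪ auctionAssigned w k) : assignFn w s ≤ k := by
  rcases Finset.mem_union.1 hs with hs | hs
  · rcases Nat.eq_zero_or_pos (assignFn w s) with h0 | h0
    · omega
    · rcases exists_of_assignFn_pos h0 with ⟨j, hj⟩
      have := (hw j).2.1
      rw [Finset.mem_sdiff] at this
      exact absurd hs (Finset.disjoint_right.1 hdisj (hj ▸ this.1))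
  · rcases (mem_assigned_iff w k s).1 hs with ⟨j, hj, hjs⟩
    rw [← hjs, assignFn_win hw]
    omega

lemma mem_of_assignFn_le (hw : IsAuction R T c w) (hunion : R ∪ T = Finset.univ)
    {s : V} {k : ℕ} (hs : assignFn w s ≤ k) : s ∈ R ∪ auctionAssigned w k := by
  rcases Nat.eq_zero_or_pos (assignFn w s) with h0 | h0
  · have hsV : s ∈ R ∪ T := hunion ▸ Finset.mem_univ s
    rcases Finset.mem_union.1 hsV with h | h
    · exact Finset.mem_union_left _ h
    · rcases exists_round hw h with ⟨j, hj⟩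
      rw [← hj, assignFn_win hw] at h0
      omega
  · rcases exists_of_assignFn_pos h0 with ⟨j, hj⟩
    have hval : assignFn w s = (j : ℕ) + 1 := by rw [← hj, assignFn_win hw]
    apply Finset.mem_union_right
    exact (mem_assigned_iff w k s).2 ⟨j, by omega, hj⟩

lemma le_assignFn (hw : IsAuction R T c w) {t : V} {k : ℕ}
    (ht : t ∈ T \ auctionAssigned w k) : k + 1 ≤ assignFn w t := by
  rw [Finset.mem_sdiff] at ht
  rcases exists_round hw ht.1 with ⟨j, hj⟩
  have hval : assignFn w t = (j : ℕ) + 1 := by rw [← hj, assignFn_win hw]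
  by_contra hc
  exact ht.2 ((mem_assigned_iff w k t).2 ⟨j, by omega, hj⟩)

lemma mem_sdiff_of_le_assignFn (hw : IsAuction R T c w) {t : V} {k : ℕ}
    (ht : k + 1 ≤ assignFn w t) : t ∈ T \ auctionAssigned w k := by
  rcases exists_of_assignFn_pos (by omega : 0 < assignFn w t) with ⟨j, hj⟩
  have hval : assignFn w t = (j : ℕ) + 1 := by rw [← hj, assignFn_win hw]
  rw [Finset.mem_sdiff]
  constructor
  · have := (hw j).2.1
    rw [Finset.mem_sdiff] at this
    exact hj ▸ this.1
  · intro hc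
    rcases (mem_assigned_iff w k t).1 hc with ⟨j', hj', hj's⟩
    have : j' = j := win_tasks_inj hw (by rw [hj's, hj])
    omega

lemma mem_bidRounds {a : V → ℕ} {x y : V} {k : ℕ} :
    k ∈ bidRounds a x y ↔ min (a x) (a y) < k ∧ k ≤ max (a x) (a y) := by
  simp [bidRounds]

lemma swap_ne (hw : IsAuction R T c w) (hdisj : Disjoint R T) (k K : Fin T.card) :
    ((w k).2, (w k).1) ≠ w K := by
  intro h
  have h1 : (w k).2 = (w K).1 := congrArg Prod.fst h
  have h2 : (w k).1 = (w K).2 := congrArg Prod.snd h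
  have a1 : assignFn w (w k).2 = (k : ℕ) + 1 := assignFn_win hw k
  have a2 : assignFn w (w K).2 = (K : ℕ) + 1 := assignFn_win hw K
  have a3 : assignFn w (w K).1 ≤ (K : ℕ) := assignFn_le hw hdisj (hw K).1
  have a4 : assignFn w (w k).1 ≤ (k : ℕ) := assignFn_le hw hdisj (hw k).1
  rw [h1] at a1; rw [← h2] at a2
  omega

lemma win_ne (hw : IsAuction R T c w) {k K : Fin T.card} (h : k ≠ K) :
    w k ≠ w K := fun he => h (win_tasks_inj hw (congrArg Prod.snd he))

end Helpers

theorem statement7 {V : Type*} [Fintype V] [DecidableEq V] (R T : Finset V)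
    (hdisj : Disjoint R T) (hunion : R ∪ T = Finset.univ) (hcard : 3 ≤ Fintype.card V)
    (c c' : V → V → ℝ)
    (hsymm : ∀ x y, c x y = c y x) (hnonneg : ∀ x y, 0 ≤ c x y) (hinj : InjOnEdges c)
    (hsymm' : ∀ x y, c' x y = c' y x) (hnonneg' : ∀ x y, 0 ≤ c' x y) (hinj' : InjOnEdges c')
    (w : Fin T.card → V × V) (hw : IsAuction R T c w)
    -- the edge `e = w K` is a winning edge, with second-best edge `u` in round `K`
    (K : Fin T.card) (u : V × V) (hu : IsSecondBest c w K u)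
    -- `c'` agrees with `c` on every edge other than `e`
    (hsame : ∀ p q : V, (p, q) ≠ w K → (q, p) ≠ w K → c' p q = c p q) :
    -- the auction on `c'` outputs the same winning-edge list (hence the same
    -- assignment function) iff `c(u_K) > c'(e)`, and in addition
    -- `c'(e) > max_{k ∈ B_e ∖ {K}} c(w_k)` when `B_e ∖ {K} ≠ ∅`,
    -- while `c'(e) ≥ 0` when `B_e = {K}`
    IsAuction R T c' w ↔
      (c' (w K).1 (w K).2 < c u.1 u.2 ∧
       (∀ k : Fin T.card,
          ((k : ℕ) + 1) ∈ bidRounds (assignFn w) (w K).1 (w K).2 → k ≠ K →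
          c (w k).1 (w k).2 < c' (w K).1 (w K).2) ∧
       (bidRounds (assignFn w) (w K).1 (w K).2 = {(K : ℕ) + 1} →
          0 ≤ c' (w K).1 (w K).2))  := by
  have a2 : assignFn w (w K).2 = (K : ℕ) + 1 := assignFn_win hw K
  have a1K : assignFn w (w K).1 ≤ (K : ℕ) := assignFn_le hw hdisj (hw K).1
  constructor
  · intro hw'
    refine ⟨?_, ?_, fun _ => hnonneg' _ _⟩
    · obtain ⟨hu1, hu2, hu3, hu4, -⟩ := hu
      rw [mem_bidRounds] at hu4
      rcases le_total (assignFn w u.1) (assignFn w u.2) with hle | hle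
      · have hsmem : u.1 ∈ R ∪ auctionAssigned w (K : ℕ) :=
          mem_of_assignFn_le hw hunion (by omega)
        have htmem : u.2 ∈ T \ auctionAssigned w (K : ℕ) :=
          mem_sdiff_of_le_assignFn hw (by omega)
        have h := (hw' K).2.2 u.1 hsmem u.2 htmem (by rwa [Prod.mk.eta])
        rwa [hsame u.1 u.2 (by rwa [Prod.mk.eta]) hu3] at h
      · have hsmem : u.2 ∈ R ∪ auctionAssigned w (K : ℕ) :=
          mem_of_assignFn_le hw hunion (by omega)
        have htmem : u.1 ∈ T \ auctionAssigned w (K : ℕ) :=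
          mem_sdiff_of_le_assignFn hw (by omega)
        have h := (hw' K).2.2 u.2 hsmem u.1 htmem hu3
        rwa [hsame u.2 u.1 hu3 (by rwa [Prod.mk.eta]), hsymm] at h
    · intro k hmem hk
      rw [mem_bidRounds] at hmem
      have hsmem : (w K).1 ∈ R ∪ auctionAssigned w (k : ℕ) :=
        mem_of_assignFn_le hw hunion (by omega)
      have hkK : (k : ℕ) < (K : ℕ) := by
        rcases Nat.lt_or_ge (k : ℕ) (K : ℕ) with h | h
        · exact h
        · exfalso
          have : (k : ℕ) ≠ (K : ℕ) := fun he => hk (Fin.ext he)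
          omega
      have htmem : (w K).2 ∈ T \ auctionAssigned w (k : ℕ) :=
        mem_sdiff_of_le_assignFn hw (by omega)
      have hne : ((w K).1, (w K).2) ≠ w k := by
        rw [Prod.mk.eta]; exact win_ne hw hk.symm
      have h := (hw' k).2.2 (w K).1 hsmem (w K).2 htmem hne
      rwa [hsame (w k).1 (w k).2 (by rw [Prod.mk.eta]; exact win_ne hw hk)
        (swap_ne hw hdisj k K)] at h
  · rintro ⟨h1, h2, -⟩ k
    refine ⟨(hw k).1, (hw k).2.1, ?_⟩
    intro s hs t ht hne
    have has : assignFn w s ≤ (k : ℕ) := assignFn_le hw hdisj hs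
    have hat : (k : ℕ) + 1 ≤ assignFn w t := le_assignFn hw ht
    by_cases hkK : k = K
    · have hkv : (k : ℕ) = (K : ℕ) := by rw [hkK]
      have hts : (t, s) ≠ w K := by
        intro h
        have ht1 : t = (w K).1 := congrArg Prod.fst h
        rw [ht1] at hat
        omega
      have hneK : (s, t) ≠ w K := by rw [← hkK]; exact hne
      rw [hkK, hsame s t hneK hts]
      refine lt_of_lt_of_le h1 (hu.2.2.2.2 s t (fun h => by rw [h] at has; omega) ?_ hneK hts)
      rw [mem_bidRounds]
      omega
    · by_cases hwK : (s, t) = w K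
      · have hs1 : s = (w K).1 := congrArg Prod.fst hwK
        have ht2 : t = (w K).2 := congrArg Prod.snd hwK
        have hbr : ((k : ℕ) + 1) ∈ bidRounds (assignFn w) (w K).1 (w K).2 := by
          rw [mem_bidRounds]
          rw [hs1] at has; rw [ht2] at hat
          omega
        have h := h2 k hbr hkK
        calc c' (w k).1 (w k).2
            = c (w k).1 (w k).2 := hsame _ _ (by rw [Prod.mk.eta]; exact win_ne hw hkK)
              (swap_ne hw hdisj k K)
          _ < c' (w K).1 (w K).2 := h
          _ = c' s t := by rw [hs1, ht2]
      · by_cases hwK2 : (t, s) = w K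
        · exfalso
          have ht1 : t = (w K).1 := congrArg Prod.fst hwK2
          have hs2 : s = (w K).2 := congrArg Prod.snd hwK2
          rw [ht1] at hat; rw [hs2] at has
          omega
        · rw [hsame s t hwK hwK2,
            hsame (w k).1 (w k).2 (by rw [Prod.mk.eta]; exact win_ne hw hkK)
              (swap_ne hw hdisj k K)]
          exact (hw k).2.2 s hs t ht hne
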